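/- Fix h ≥ 0 and let b_h(n) denote the number of Motzkin paths of length n with height at most h that have no horizontal step at level h. Then in the formal power series ring ℚ[[z]]: (∑_{n≥0} b_h(n)·z^n) · D*_{h+1}(z) = D*_h(z), where the polynomials D*_h, D*_{h+1} are regarded as power series. -/

import Mathlib

open Finset
open scoped Classical

/-- A step: `+1`, `-1` or `0`. -/
abbrev Step : Type := ({1, -1, 0} : Finset ℤ)

/-- Partial sum of the first `k` steps. -/
def psum {n : ℕ} (w : Fin n → Step) (k : ℕ) : ℤ :=
  ∑ i : Fin n, if (i : ℕ) < k then (w i : ℤ) else 0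

/-- `w` is a Motzkin path: all partial sums are nonnegative and the total sum is `0`. -/
def IsMotzkin {n : ℕ} (w : Fin n → Step) : Prop :=
  (∀ k ∈ Finset.range (n + 1), 0 ≤ psum w k) ∧ psum w n = 0

/-- The height of a path: the maximum of its partial sums (`0` for the empty path). -/
def height {n : ℕ} (w : Fin n → Step) : ℤ :=
  (Finset.range (n + 1)).sup' (Finset.nonempty_range_iff.mpr (Nat.succ_ne_zero n)) (psum w)

/-- `w` has a horizontal step at level `j`: some step is `0` and the partial sum up to
and including that step equals `j`. -/
def HasHorizAt {n : ℕ} (w : Fin n → Step) (j : ℤ) : Prop :=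
  ∃ i : Fin n, (w i : ℤ) = 0 ∧ psum w ((i : ℕ) + 1) = j

open Polynomial in
/-- `D 0 = 1`, `D 1 = 1 - z`, `D n = (1-z) D (n-1) - z^2 D (n-2)`. -/
noncomputable def D : ℕ → Polynomial ℚ
  | 0 => 1
  | 1 => 1 - X
  | (n + 2) => (1 - X) * D (n + 1) - X ^ 2 * D n

open Polynomial in
/-- `D* 0 = 1`, `D* 1 = 1`, `D* n = D (n-1) - z^2 D (n-2)`. -/
noncomputable def Dstar : ℕ → Polynomial ℚ
  | 0 => 1
  | 1 => 1
  | (n + 2) => D (n + 1) - X ^ 2 * D n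

/-- `b h n` is the number of Motzkin paths of length `n` with height at most `h`
having no horizontal step at level `h`. -/
noncomputable def b (h n : ℕ) : ℕ :=
  (Finset.univ.filter fun w : Fin n → Step =>
    IsMotzkin w ∧ height w ≤ (h : ℤ) ∧ ¬ HasHorizAt w (h : ℤ)).card

lemma psum_succ_eq {n : ℕ} (w : Fin (n+1) → Step) (k : ℕ) :
    psum w k = psum (Fin.init w) k + (if n < k then (w (Fin.last n) : ℤ) else 0) := by
  unfold psum
  rw [Fin.sum_univ_castSucc]
  simp [Fin.init]

lemma psum_of_le {n : ℕ} (v : Fin n → Step) {k : ℕ} (hk : n ≤ k) :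
    psum v k = psum v n := by
  unfold psum
  refine Finset.sum_congr rfl fun i _ => ?_
  have : (i:ℕ) < n := i.is_lt
  rw [if_pos this, if_pos (lt_of_lt_of_le this hk)]

lemma psum_zero' {n : ℕ} (v : Fin n → Step) : psum v 0 = 0 := by
  unfold psum; simp

def Good (h : ℕ) {n : ℕ} (w : Fin n → Step) (j : ℤ) : Prop :=
  (∀ k ∈ Finset.range (n+1), 0 ≤ psum w k ∧ psum w k ≤ (h:ℤ)) ∧
    ¬ HasHorizAt w (h:ℤ) ∧ psum w n = j

noncomputable def cnt (h n : ℕ) (j : ℤ) : ℕ :=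
  (Finset.univ.filter fun w : Fin n → Step => Good h w j).card

lemma cnt_eq_zero {h n : ℕ} {j : ℤ} (hj : j < 0 ∨ (h:ℤ) < j) : cnt h n j = 0 := by
  rw [cnt, Finset.card_eq_zero, Finset.filter_eq_empty_iff]
  rintro w - ⟨hb, -, he⟩
  have := hb n (by simp)
  rw [he] at this
  rcases hj with hj | hj <;> omega

lemma cnt_zero (h : ℕ) (j : ℤ) : cnt h 0 j = if j = 0 then 1 else 0 := by
  rw [cnt]
  split_ifs with hj
  · rw [Finset.card_eq_one]
    refine ⟨Fin.elim0, ?_⟩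
    ext w
    simp only [Finset.mem_filter, Finset.mem_univ, true_and, Finset.mem_singleton]
    constructor
    · intro _; ext i; exact i.elim0
    · rintro rfl
      subst hj
      refine ⟨?_, ?_, psum_zero' _⟩
      · intro k hk
        simp only [Finset.mem_range] at hk
        have : k = 0 := by omega
        subst this
        simp [psum_zero']
      · rintro ⟨i, -⟩; exact i.elim0
  · rw [Finset.card_eq_zero, Finset.filter_eq_empty_iff]
    rintro w - ⟨-, -, he⟩
    rw [psum_zero'] at he
    exact hj he.symm

lemma good_succ_iff {h n : ℕ} {j : ℤ} (hj0 : 0 ≤ j) (hjh : j ≤ (h:ℤ)) (w : Fin (n+1) → Step) :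
    Good h w j ↔ Good h (Fin.init w) (j - (w (Fin.last n) : ℤ)) ∧
      ¬((w (Fin.last n) : ℤ) = 0 ∧ j = (h:ℤ)) := by
  set v := Fin.init w with hv
  set s : ℤ := (w (Fin.last n) : ℤ) with hs
  have fact1 : ∀ k, k ≤ n → psum w k = psum v k := by
    intro k hk
    rw [psum_succ_eq, if_neg (by omega), add_zero]
  have fact2 : psum w (n+1) = psum v n + s := by
    rw [psum_succ_eq, if_pos (by omega), psum_of_le v (Nat.le_succ n)]
  constructor
  · rintro ⟨hb, hnh, he⟩
    have hvn : psum v n = j - s := by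
      rw [fact2] at he; omega
    refine ⟨⟨?_, ?_, hvn⟩, ?_⟩
    · intro k hk
      simp only [Finset.mem_range] at hk
      rw [← fact1 k (by omega)]
      exact hb k (by simp only [Finset.mem_range]; omega)
    · rintro ⟨i, hi0, hie⟩
      refine hnh ⟨i.castSucc, hi0, ?_⟩
      have : ((i.castSucc : Fin (n+1)) : ℕ) = (i : ℕ) := rfl
      rw [this, fact1 _ (by omega)]
      exact hie
    · rintro ⟨hs0, hjH⟩
      refine hnh ⟨Fin.last n, hs0, ?_⟩
      have : ((Fin.last n : Fin (n+1)) : ℕ) = n := rfl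
      rw [this, he]
      exact hjH
  · rintro ⟨⟨hb, hnh, he⟩, hlast⟩
    have hwn1 : psum w (n+1) = j := by rw [fact2, he]; ring
    refine ⟨?_, ?_, hwn1⟩
    · intro k hk
      simp only [Finset.mem_range] at hk
      by_cases hkn : k ≤ n
      · rw [fact1 k hkn]
        exact hb k (by simp only [Finset.mem_range]; omega)
      · have : k = n + 1 := by omega
        subst this
        rw [hwn1]
        exact ⟨hj0, hjh⟩
    · rintro ⟨i, hi0, hie⟩
      rcases Fin.eq_castSucc_or_eq_last i with ⟨i', rfl⟩ | rfl
      · refine hnh ⟨i', ?_, ?_⟩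
        · exact hi0
        · have hc : ((i'.castSucc : Fin (n+1)) : ℕ) = (i' : ℕ) := rfl
          rw [hc] at hie
          rw [← fact1 _ (by omega)]
          exact hie
      · have : ((Fin.last n : Fin (n+1)) : ℕ) = n := rfl
        rw [this, hwn1] at hie
        exact hlast ⟨hi0, hie ▸ rfl⟩

noncomputable def lastEquiv (n : ℕ) : (Fin (n+1) → Step) ≃ ((Fin n → Step) × Step) where
  toFun := fun w => (Fin.init w, w (Fin.last n))
  invFun := fun p => Fin.snoc p.1 p.2
  left_inv := fun w => Fin.snoc_init_self w
  right_inv := fun p => by simp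

lemma cnt_succ (h n : ℕ) {j : ℤ} (hj0 : 0 ≤ j) (hjh : j ≤ (h:ℤ)) :
    cnt h (n+1) j
      = cnt h n (j-1) + cnt h n (j+1) + (if j = (h:ℤ) then 0 else cnt h n j) := by
  have key : ∀ (v : Fin n → Step) (s : Step),
      Good h (Fin.snoc v s) j ↔ Good h v (j - (s:ℤ)) ∧ ¬((s:ℤ) = 0 ∧ j = (h:ℤ)) := by
    intro v s
    rw [good_succ_iff hj0 hjh]
    rw [Fin.init_snoc, Fin.snoc_last]
  have step1 : cnt h (n+1) j
      = ∑ v : Fin n → Step, ∑ s : Step, (if Good h (Fin.snoc v s) j then 1 else 0) := by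
    rw [cnt, Finset.card_filter]
    rw [← Equiv.sum_comp (lastEquiv n).symm (fun w => if Good h w j then 1 else 0)]
    rw [Fintype.sum_prod_type]
    rfl
  rw [step1]
  have step2 : ∀ v : Fin n → Step,
      ∑ s : Step, (if Good h (Fin.snoc v s) j then 1 else 0)
        = ((if Good h v (j-1) then 1 else 0)
          + ((if Good h v (j+1) then 1 else 0)
          + (if Good h v j ∧ ¬ j = (h:ℤ) then 1 else 0))) := by
    intro v
    have : ∀ s : Step, (if Good h (Fin.snoc v s) j then 1 else 0)
        = (fun x : ℤ => if Good h v (j - x) ∧ ¬(x = 0 ∧ j = (h:ℤ)) then 1 else 0) (s:ℤ) := by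
      intro s
      simp only [key v s]
    rw [Finset.sum_congr rfl (fun s _ => this s)]
    rw [Finset.sum_coe_sort ({1, -1, 0} : Finset ℤ)
      (fun x : ℤ => if Good h v (j - x) ∧ ¬(x = 0 ∧ j = (h:ℤ)) then 1 else 0)]
    rw [show ({1, -1, 0} : Finset ℤ) = insert 1 (insert (-1) {0}) from rfl]
    rw [Finset.sum_insert (by decide), Finset.sum_insert (by decide), Finset.sum_singleton]
    norm_num [sub_neg_eq_add]
  rw [Finset.sum_congr rfl (fun v _ => step2 v)]
  rw [Finset.sum_add_distrib, Finset.sum_add_distrib]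
  rw [cnt, cnt, Finset.card_filter, Finset.card_filter]
  by_cases hjH : j = (h:ℤ)
  · simp only [hjH, if_pos rfl, not_true, and_false, if_neg, ite_false]
    simp
  · rw [if_neg hjH, cnt, Finset.card_filter]
    have : ∀ v : Fin n → Step, (if Good h v j ∧ ¬ j = (h:ℤ) then 1 else 0)
        = (if Good h v j then 1 else 0) := by
      intro v
      simp [hjH]
    rw [Finset.sum_congr rfl (fun v _ => this v)]
    ring

lemma D_rec (m : ℕ) :
    D (m+2) = (1 - Polynomial.X) * D (m+1) - Polynomial.X^2 * D m := rfl

lemma Dstar_eq (m : ℕ) : Dstar (m+2) = D (m+1) - Polynomial.X^2 * D m := rfl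

lemma Dstar_rec : ∀ m : ℕ,
    Dstar (m+2) = (1 - Polynomial.X) * Dstar (m+1) - Polynomial.X^2 * Dstar m
  | 0 => by
      show D 1 - Polynomial.X^2 * D 0 = _
      show _ = (1 - Polynomial.X) * 1 - Polynomial.X^2 * 1
      show (1 - Polynomial.X) - Polynomial.X^2 * 1 = _
      ring
  | 1 => by
      rw [Dstar_eq, Dstar_eq, D_rec]
      show _ = (1 - Polynomial.X) * (D 1 - Polynomial.X^2 * D 0) - Polynomial.X^2 * 1
      simp only [show D 1 = 1 - Polynomial.X from rfl, show D 0 = 1 from rfl]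
      ring
  | (k+2) => by
      rw [Dstar_eq, Dstar_eq, Dstar_eq, D_rec (k+1), D_rec k]
      ring

noncomputable def F (h : ℕ) (j : ℤ) : PowerSeries ℚ :=
  PowerSeries.mk fun n => (cnt h n j : ℚ)

lemma F_zero (h : ℕ) {j : ℤ} (hj : j < 0 ∨ (h:ℤ) < j) : F h j = 0 := by
  ext n
  simp [F, cnt_eq_zero hj]

lemma F_eq (h : ℕ) {j : ℤ} (hj0 : 0 ≤ j) (hjh : j ≤ (h:ℤ)) :
    F h j = (if j = 0 then 1 else 0)
      + PowerSeries.X * (F h (j-1) + F h (j+1) + (if j = (h:ℤ) then 0 else F h j)) := by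
  ext n
  cases n with
  | zero =>
      rw [map_add]
      have h1 : (PowerSeries.coeff 0) (PowerSeries.X *
          (F h (j-1) + F h (j+1) + (if j = (h:ℤ) then 0 else F h j))) = 0 := by
        rw [PowerSeries.coeff_zero_eq_constantCoeff, map_mul]
        simp
      rw [h1, add_zero, F, PowerSeries.coeff_mk, cnt_zero]
      split_ifs <;> simp
  | succ n =>
      rw [map_add, PowerSeries.coeff_succ_X_mul]
      have h1 : (PowerSeries.coeff (R := ℚ) (n+1)) (if j = 0 then (1 : PowerSeries ℚ) else 0) = 0 := by
        split_ifs <;> simp [PowerSeries.coeff_one]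
      rw [h1, zero_add, map_add, map_add]
      simp only [F, PowerSeries.coeff_mk]
      rw [cnt_succ h n hj0 hjh]
      push_cast
      split_ifs <;> simp

lemma homog_zero (h : ℕ) (G : ℤ → PowerSeries ℚ)
    (h0 : ∀ j : ℤ, j < 0 ∨ (h:ℤ) < j → G j = 0)
    (hrec : ∀ j : ℤ, 0 ≤ j → j ≤ (h:ℤ) →
      G j = PowerSeries.X * (G (j-1) + G (j+1) + (if j = (h:ℤ) then 0 else G j))) :
    ∀ j, G j = 0 := by
  have claim : ∀ n : ℕ, ∀ j : ℤ, (PowerSeries.coeff n) (G j) = 0 := by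
    intro n
    induction n with
    | zero =>
        intro j
        by_cases hj : 0 ≤ j ∧ j ≤ (h:ℤ)
        · rw [hrec j hj.1 hj.2, PowerSeries.coeff_zero_eq_constantCoeff, map_mul]
          simp
        · rw [h0 j (by omega), map_zero]
    | succ n ih =>
        intro j
        by_cases hj : 0 ≤ j ∧ j ≤ (h:ℤ)
        · rw [hrec j hj.1 hj.2, PowerSeries.coeff_succ_X_mul, map_add, map_add, ih, ih]
          split_ifs <;> simp [ih]
        · rw [h0 j (by omega), map_zero]
  intro j
  ext n
  rw [claim n j, map_zero]

noncomputable def Q (h m : ℕ) : PowerSeries ℚ :=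
  PowerSeries.X^m * ((Dstar (h - m) : Polynomial ℚ) : PowerSeries ℚ)

noncomputable def Pser (h : ℕ) (j : ℤ) : PowerSeries ℚ :=
  if 0 ≤ j ∧ j ≤ (h:ℤ) then Q h j.toNat else 0

lemma Pser_zero (h : ℕ) {j : ℤ} (hj : j < 0 ∨ (h:ℤ) < j) : Pser h j = 0 := by
  rw [Pser, if_neg (by omega)]

lemma Pser_coe (h m : ℕ) (hm : m ≤ h) : Pser h (m : ℤ) = Q h m := by
  rw [Pser, if_pos ⟨by positivity, by exact_mod_cast hm⟩, Int.toNat_natCast]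

lemma Dstar_rec_ps (m : ℕ) :
    ((Dstar (m+1) : Polynomial ℚ) : PowerSeries ℚ)
      = ((Dstar (m+2) : Polynomial ℚ) : PowerSeries ℚ)
        + PowerSeries.X^2 * ((Dstar m : Polynomial ℚ) : PowerSeries ℚ)
        + PowerSeries.X * ((Dstar (m+1) : Polynomial ℚ) : PowerSeries ℚ) := by
  have := Dstar_rec m
  have h2 : ((Dstar (m+2) : Polynomial ℚ) : PowerSeries ℚ)
      = (1 - PowerSeries.X) * ((Dstar (m+1) : Polynomial ℚ) : PowerSeries ℚ)
        - PowerSeries.X^2 * ((Dstar m : Polynomial ℚ) : PowerSeries ℚ) := by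
    rw [this]
    push_cast
    ring
  rw [h2]
  ring

lemma Pser_eq (h : ℕ) {j : ℤ} (hj0 : 0 ≤ j) (hjh : j ≤ (h:ℤ)) :
    Pser h j = (if j = 0 then ((Dstar (h+1) : Polynomial ℚ) : PowerSeries ℚ) else 0)
      + PowerSeries.X * (Pser h (j-1) + Pser h (j+1)
        + (if j = (h:ℤ) then 0 else Pser h j)) := by
  lift j to ℕ using hj0 with m
  have hmh : m ≤ h := by exact_mod_cast hjh
  rcases m with _ | l
  · -- m = 0
    rw [show ((0:ℕ):ℤ) = 0 from rfl, if_pos rfl]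
    rw [show (0:ℤ) - 1 = (-1:ℤ) from by ring, Pser_zero h (j := -1) (Or.inl (by norm_num))]
    rw [show (0:ℤ) + 1 = ((1:ℕ):ℤ) from by norm_num]
    rw [show Pser h 0 = Q h 0 from by simpa using Pser_coe h 0 (Nat.zero_le h)]
    rcases h with _ | k
    · -- h = 0
      rw [if_pos (show (0:ℤ) = ((0:ℕ):ℤ) from by norm_num),
        Pser_zero 0 (j := ((1:ℕ):ℤ)) (Or.inr (by norm_num))]
      simp only [Q, Nat.sub_zero]
      simp only [show Dstar 0 = 1 from rfl, show Dstar 1 = 1 from rfl,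
        Polynomial.coe_one, pow_zero]
      ring
    · -- h = k+1
      rw [if_neg (by exact_mod_cast (Nat.succ_ne_zero k).symm)]
      rw [Pser_coe (k+1) 1 (by omega)]
      simp only [Q, Nat.sub_zero, show k + 1 - 1 = k from rfl]
      linear_combination (Dstar_rec_ps k)
  · -- m = l+1
    have hne : ((l+1:ℕ):ℤ) ≠ 0 := by exact_mod_cast Nat.succ_ne_zero l
    rw [if_neg hne]
    rw [show ((l+1:ℕ):ℤ) - 1 = ((l:ℕ):ℤ) from by push_cast; ring]
    rw [Pser_coe h l (by omega), Pser_coe h (l+1) hmh]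
    rw [show ((l+1:ℕ):ℤ) + 1 = ((l+2:ℕ):ℤ) from by push_cast; ring]
    rcases Nat.lt_or_ge (l+1) h with hlt | hge
    · -- l+1 < h
      rw [if_neg (by exact_mod_cast Nat.ne_of_lt hlt)]
      rw [Pser_coe h (l+2) (by omega)]
      obtain ⟨e, he⟩ : ∃ e, h - (l+1) = e + 1 := ⟨h - l - 2, by omega⟩
      simp only [Q]
      rw [he, show h - l = e + 2 from by omega, show h - (l+2) = e from by omega]
      linear_combination (PowerSeries.X : PowerSeries ℚ)^(l+1) * (Dstar_rec_ps e)
    · -- l+1 = h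
      have heq : l + 1 = h := by omega
      subst heq
      rw [if_pos rfl, Pser_zero (l+1) (j := ((l+2:ℕ):ℤ)) (Or.inr (by exact_mod_cast Nat.lt_succ_self (l+1)))]
      simp only [Q]
      rw [Nat.sub_self, show l + 1 - l = 1 from by omega]
      simp only [show Dstar 0 = 1 from rfl, show Dstar 1 = 1 from rfl, Polynomial.coe_one]
      ring

lemma main (h : ℕ) :
    F h 0 * ((Dstar (h+1) : Polynomial ℚ) : PowerSeries ℚ)
      = ((Dstar h : Polynomial ℚ) : PowerSeries ℚ) := by
  set Ds := ((Dstar (h+1) : Polynomial ℚ) : PowerSeries ℚ) with hDs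
  have key := homog_zero h (fun j => F h j * Ds - Pser h j) ?_ ?_
  · have k0 := key 0
    simp only [sub_eq_zero] at k0
    rw [k0]
    rw [show Pser h 0 = Q h 0 from by simpa using Pser_coe h 0 (Nat.zero_le h)]
    simp [Q]
  · intro j hj
    rw [F_zero h hj, Pser_zero h hj]
    ring
  · intro j hj0 hjh
    have e1 := F_eq h hj0 hjh
    have e2 := Pser_eq h hj0 hjh
    split_ifs at e1 e2 ⊢ <;> linear_combination Ds * e1 - e2

lemma b_eq (h n : ℕ) : b h n = cnt h n 0 := by
  rw [b, cnt]
  congr 1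
  ext w
  simp only [Finset.mem_filter, Finset.mem_univ, true_and]
  constructor
  · rintro ⟨⟨hnn, hz⟩, hht, hnh⟩
    refine ⟨fun k hk => ⟨hnn k hk, ?_⟩, hnh, hz⟩
    exact le_trans (Finset.le_sup' (psum w) hk) hht
  · rintro ⟨hb, hnh, hz⟩
    refine ⟨⟨fun k hk => (hb k hk).1, hz⟩, ?_, hnh⟩
    exact Finset.sup'_le _ _ fun k hk => (hb k hk).2


/-- The generating function of Motzkin paths of height at most `h` with no horizontal
step at level `h` equals `D* h / D* (h+1)`. -/
theorem motzkin_no_horiz_genfun (h : ℕ) :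
    (PowerSeries.mk fun n => (b h n : ℚ)) * (Dstar (h + 1) : PowerSeries ℚ)
      = (Dstar h : PowerSeries ℚ) := by
  have hb : (PowerSeries.mk fun n => (b h n : ℚ)) = F h 0 := by
    ext n
    simp [F, b_eq]
  rw [hb]
  exact main h
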